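/- Let n ≥ 2 and let f = (y₁² + y₁)(y₂² + y₂)⋯(y_{n−1}² + y_{n−1}) − z³(yₙ² + yₙ) ∈ ℂ[y₁,…,yₙ,z]. Then the quotient ring ℂ[y₁,…,yₙ,z]/(f) is an integral domain, and its field of fractions is isomorphic as a ℂ-algebra to the field ℂ(t₁,…,tₙ) of rational functions in n variables over ℂ (the fraction field of the polynomial ring in n variables). -/

import Mathlib

open MvPolynomial
set_option maxHeartbeats 1000000
set_option synthInstance.maxHeartbeats 400000

namespace Stmt9


/-- `X i + C a` is prime in a multivariate polynomial ring over ℂ. -/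
lemma prime_X_add_C {k : ℕ} (i : Fin (k + 1)) (a : ℂ) :
    Prime (X i + C a : MvPolynomial (Fin (k + 1)) ℂ) := by
  let e := (renameEquiv ℂ (Equiv.swap i 0)).trans (finSuccEquiv ℂ k)
  have hC : finSuccEquiv ℂ k (C a) = Polynomial.C (C a) := by
    simp [finSuccEquiv_apply]
  have he : e (X i + C a) = Polynomial.X + Polynomial.C (C a) := by
    simp only [e, AlgEquiv.trans_apply, map_add, renameEquiv_apply, rename_X, rename_C,
      Equiv.swap_apply_left, finSuccEquiv_X_zero, hC]
  have hp : Prime (Polynomial.X + Polynomial.C (C a) :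
      Polynomial (MvPolynomial (Fin k) ℂ)) := by
    have := Polynomial.prime_X_sub_C (-(C a) : MvPolynomial (Fin k) ℂ)
    rwa [map_neg, sub_neg_eq_add] at this
  have := (MulEquiv.prime_iff e.toMulEquiv).mp (by
    show Prime (e (X i + C a))
    rw [he]; exact hp)
  exact this

lemma prime_X' {k : ℕ} (i : Fin (k + 1)) : Prime (X i : MvPolynomial (Fin (k + 1)) ℂ) := by
  have := prime_X_add_C i 0
  rwa [map_zero, add_zero] at this


noncomputable section
variable (m : ℕ)

def i₀ : Fin (m + 2) := ⟨m, by omega⟩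
def i₁ : Fin (m + 2) := ⟨m + 1, by omega⟩

lemma i₀_ne_i₁ : i₀ m ≠ i₁ m := by simp [i₀, i₁, Fin.ext_iff]

/-- the defining polynomial -/
def fpoly : MvPolynomial (Option (Fin (m + 2))) ℂ :=
  (∏ i ∈ Finset.univ.erase (i₁ m),
      ((X (some i) : MvPolynomial (Option (Fin (m + 2))) ℂ) ^ 2 + X (some i))) -
    X none ^ 3 * (X (some (i₁ m)) ^ 2 + X (some (i₁ m)))

/-- full product coefficient in `T = ℂ[t]` -/
def Aprod : MvPolynomial (Fin (m + 2)) ℂ :=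
  ∏ i ∈ Finset.univ.erase (i₁ m), ((X i : MvPolynomial (Fin (m + 2)) ℂ) ^ 2 + X i)

def Bpoly : MvPolynomial (Fin (m + 2)) ℂ := (X (i₁ m)) ^ 2 + X (i₁ m)

lemma quad_ne_zero (i : Fin (m + 2)) :
    ((X i : MvPolynomial (Fin (m + 2)) ℂ) ^ 2 + X i) ≠ 0 := by
  intro h
  have := congrArg (eval (fun _ => (1 : ℂ))) h
  simp at this

lemma Aprod_ne_zero : Aprod m ≠ 0 :=
  Finset.prod_ne_zero_iff.mpr fun i _ => quad_ne_zero m i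

lemma Bpoly_ne_zero : Bpoly m ≠ 0 := quad_ne_zero m (i₁ m)

lemma eval_Aprod (u : Fin (m + 2) → ℂ) :
    eval u (Aprod m) = ∏ i ∈ Finset.univ.erase (i₁ m), (u i ^ 2 + u i) := by
  simp [Aprod]

/-- evaluation of `Aprod` at the point which is `1` everywhere except `i₁`. -/
lemma Aprod_eval_ne_zero (u : Fin (m + 2) → ℂ) (hu : ∀ i, i ≠ i₁ m → u i = 1) :
    eval u (Aprod m) ≠ 0 := by
  rw [eval_Aprod]
  refine Finset.prod_ne_zero_iff.mpr fun i hi => ?_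
  rw [hu i (Finset.ne_of_mem_erase hi)]
  norm_num

lemma not_X_i₁_dvd_Aprod (c : ℂ) :
    ¬ (X (i₁ m) + C c ∣ Aprod m) := by
  rintro ⟨g, hg⟩
  set u : Fin (m + 2) → ℂ := fun i => if i = i₁ m then -c else 1 with hu
  have h1 : eval u (Aprod m) ≠ 0 := Aprod_eval_ne_zero m u (fun i hi => by simp [hu, hi])
  rw [hg] at h1
  simp [hu] at h1

lemma zero_mem_erase : (0 : Fin (m + 2)) ∈ Finset.univ.erase (i₁ m) := by
  simp [i₁, Fin.ext_iff]

/-- the image of `fpoly` under `optionEquivLeft`. -/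
lemma optionEquivLeft_fpoly :
    optionEquivLeft ℂ (Fin (m + 2)) (fpoly m) =
      Polynomial.C (Aprod m) - Polynomial.C (Bpoly m) * Polynomial.X ^ 3 := by
  rw [fpoly, map_sub, map_mul, map_prod]
  congr 1
  · rw [Aprod, map_prod]
    refine Finset.prod_congr rfl fun i _ => ?_
    simp [optionEquivLeft_X_some]
  · rw [map_pow, optionEquivLeft_X_none, Bpoly]
    simp only [map_add, map_pow, optionEquivLeft_X_some]
    ring

def Fpoly : Polynomial (MvPolynomial (Fin (m + 2)) ℂ) :=
  Polynomial.C (Aprod m) - Polynomial.C (Bpoly m) * Polynomial.X ^ 3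

lemma Fpoly_coeff_zero : (Fpoly m).coeff 0 = Aprod m := by
  simp [Fpoly, Polynomial.coeff_C]

lemma Fpoly_coeff_three : (Fpoly m).coeff 3 = -Bpoly m := by
  simp [Fpoly, Polynomial.coeff_C, Polynomial.coeff_C_mul, Polynomial.coeff_X_pow]

lemma Fpoly_natDegree : (Fpoly m).natDegree = 3 := by
  refine le_antisymm ?_ (Polynomial.le_natDegree_of_ne_zero ?_)
  · refine le_trans (Polynomial.natDegree_sub_le _ _) ?_
    simp only [Polynomial.natDegree_C, max_le_iff]
    constructor
    · omega
    · refine le_trans (Polynomial.natDegree_mul_le) ?_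
      simp
  · rw [Fpoly_coeff_three]
    simpa using Bpoly_ne_zero m

lemma eisenstein_Fpoly :
    (Fpoly m).IsEisensteinAt (Ideal.span {(X (0 : Fin (m + 2)) : MvPolynomial (Fin (m + 2)) ℂ)}) := by
  classical
  set S := MvPolynomial (Fin (m + 2)) ℂ
  have h01 : (0 : Fin (m + 2)) ≠ i₁ m := by simp [i₁, Fin.ext_iff]
  set rest : S := ∏ i ∈ (Finset.univ.erase (i₁ m)).erase 0, ((X i : S) ^ 2 + X i) with hrestdef
  have hrest : Aprod m = ((X (0 : Fin (m + 2)) : S) ^ 2 + X 0) * rest :=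
    (Finset.mul_prod_erase _ _ (zero_mem_erase m)).symm
  have hrestval : ∀ u : Fin (m + 2) → ℂ, (∀ i, i ≠ 0 → u i = 1) → eval u rest ≠ 0 := by
    intro u hu
    rw [hrestdef, map_prod]
    refine Finset.prod_ne_zero_iff.mpr fun i hi => ?_
    have hi0 : i ≠ 0 := Finset.ne_of_mem_erase hi
    simp [hu i hi0]
  constructor
  · rw [Polynomial.leadingCoeff, Fpoly_natDegree, Fpoly_coeff_three,
      Ideal.mem_span_singleton, dvd_neg]
    rintro ⟨g, hg⟩
    have := congrArg (eval (fun i => if i = (0 : Fin (m + 2)) then 0 else 1)) hg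
    simp [Bpoly, if_neg h01.symm, if_neg (Ne.symm h01)] at this
  · intro k hk
    rw [Fpoly_natDegree] at hk
    interval_cases k
    · rw [Fpoly_coeff_zero, Ideal.mem_span_singleton, hrest]
      exact Dvd.dvd.mul_right ⟨X 0 + 1, by ring⟩ rest
    · simp [Fpoly, Polynomial.coeff_C, Polynomial.coeff_C_mul, Polynomial.coeff_X_pow]
    · simp [Fpoly, Polynomial.coeff_C, Polynomial.coeff_C_mul, Polynomial.coeff_X_pow]
  · rw [Fpoly_coeff_zero, Ideal.span_singleton_pow, Ideal.mem_span_singleton]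
    rintro ⟨g, hg⟩
    rw [hrest] at hg
    have hcan : ((X (0 : Fin (m + 2)) : S) + 1) * rest = X 0 * g := by
      have hX : (X (0 : Fin (m + 2)) : S) ≠ 0 := X_ne_zero _
      apply mul_left_cancel₀ hX
      calc (X (0 : Fin (m + 2)) : S) * ((X 0 + 1) * rest)
          = ((X (0 : Fin (m + 2)) : S) ^ 2 + X 0) * rest := by ring
        _ = X 0 ^ 2 * g := hg
        _ = X 0 * (X 0 * g) := by ring
    set u : Fin (m + 2) → ℂ := fun i => if i = (0 : Fin (m + 2)) then 0 else 1 with hu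
    have hev := congrArg (eval u) hcan
    simp only [map_mul, map_add, map_one, eval_X] at hev
    rw [show u 0 = 0 from if_pos rfl] at hev
    rw [zero_add, one_mul, zero_mul] at hev
    exact hrestval u (fun i hi => if_neg hi) hev

lemma primitive_Fpoly : (Fpoly m).IsPrimitive := by
  intro r hr
  by_contra hru
  have hcoeff := (Polynomial.C_dvd_iff_dvd_coeff r (Fpoly m)).mp hr
  have hrA : r ∣ Aprod m := by simpa [Fpoly_coeff_zero] using hcoeff 0
  have hrB : r ∣ Bpoly m := by
    have := hcoeff 3
    rw [Fpoly_coeff_three, dvd_neg] at this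
    exact this
  have hr0 : r ≠ 0 := by
    rintro rfl
    exact Bpoly_ne_zero m (zero_dvd_iff.mp hrB)
  obtain ⟨q, hqirr, hqr⟩ := WfDvdMonoid.exists_irreducible_factor hru hr0
  have hq : Prime q := (UniqueFactorizationMonoid.irreducible_iff_prime).mp hqirr
  have hqB : q ∣ (X (i₁ m) + C 0) * (X (i₁ m) + C 1) := by
    refine hqr.trans (hrB.trans ⟨1, ?_⟩)
    simp [Bpoly]
    ring
  have hqA : q ∣ Aprod m := hqr.trans hrA
  rcases hq.2.2 _ _ hqB with hq1 | hq1
  · exact not_X_i₁_dvd_Aprod m 0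
      ((hqirr.dvd_symm (prime_X_add_C (i₁ m) 0).irreducible hq1).trans hqA)
  · exact not_X_i₁_dvd_Aprod m 1
      ((hqirr.dvd_symm (prime_X_add_C (i₁ m) 1).irreducible hq1).trans hqA)

lemma prime_Fpoly : Prime (Fpoly m) := by
  have hirr : Irreducible (Fpoly m) :=
    (eisenstein_Fpoly m).irreducible
      ((Ideal.span_singleton_prime (X_ne_zero _)).mpr (prime_X' 0))
      (primitive_Fpoly m) (by rw [Fpoly_natDegree]; omega)
  exact UniqueFactorizationMonoid.irreducible_iff_prime.mp hirr

lemma prime_fpoly : Prime (fpoly m) := by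
  have := (MulEquiv.prime_iff
    (optionEquivLeft ℂ (Fin (m + 2))).toMulEquiv).mp (by
      show Prime (optionEquivLeft ℂ (Fin (m + 2)) (fpoly m))
      rw [optionEquivLeft_fpoly]
      exact prime_Fpoly m)
  exact this

lemma fpoly_ne_zero : fpoly m ≠ 0 := (prime_fpoly m).ne_zero

/-! ## Part 2: the fraction field -/

abbrev Rp (m : ℕ) := MvPolynomial (Option (Fin (m + 2))) ℂ
abbrev Tp (m : ℕ) := MvPolynomial (Fin (m + 2)) ℂ
abbrev Qp (m : ℕ) := Rp m ⧸ Ideal.span {fpoly m}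

instance Qp_isDomain : IsDomain (Qp m) :=
  (Ideal.Quotient.isDomain_iff_prime _).mpr
    ((Ideal.span_singleton_prime (fpoly_ne_zero m)).mpr (prime_fpoly m))

abbrev FQ (m : ℕ) := FractionRing (Qp m)

/-- the composite `R → Q → FQ`. -/
def Φ : Rp m →+* FQ m :=
  (algebraMap (Qp m) (FQ m)).comp (Ideal.Quotient.mk (Ideal.span {fpoly m}))

lemma Φ_fpoly : Φ m (fpoly m) = 0 := by
  rw [Φ, RingHom.comp_apply, Ideal.Quotient.eq_zero_iff_mem.mpr
    (Ideal.mem_span_singleton_self _), map_zero]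

lemma Φ_eq_zero_iff (r : Rp m) : Φ m r = 0 ↔ fpoly m ∣ r := by
  rw [Φ, RingHom.comp_apply]
  rw [← map_zero (algebraMap (Qp m) (FQ m))]
  rw [(IsFractionRing.injective (Qp m) (FQ m)).eq_iff]
  rw [Ideal.Quotient.eq_zero_iff_mem, Ideal.mem_span_singleton]

lemma Φ_C (c : ℂ) : Φ m (MvPolynomial.C c) = algebraMap ℂ (FQ m) c := by
  rw [Φ, RingHom.comp_apply]
  rw [IsScalarTower.algebraMap_apply ℂ (Qp m) (FQ m),
    IsScalarTower.algebraMap_apply ℂ (Rp m) (Qp m), MvPolynomial.algebraMap_eq,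
    Ideal.Quotient.algebraMap_eq]

/-- the distinguished elements of `FQ`. -/
def yb : FQ m := Φ m (X (some (i₀ m)))
def wb : FQ m := Φ m (X (some (i₁ m)))
def zb : FQ m := Φ m (X none)

/-- division-free: `fpoly` does not divide `X (some (i₀ m))`. -/
lemma yb_ne_zero : yb m ≠ 0 := by
  rw [yb]
  rw [Ne, Φ_eq_zero_iff]
  rintro ⟨g, hg⟩
  set a : Option (Fin (m + 2)) → ℂ := fun o => o.elim 1 (fun i => if i = i₀ m ∨ i = i₁ m then -1 else 1) with ha
  have hza : eval a (fpoly m) = 0 := by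
    rw [fpoly, map_sub, map_mul, map_prod]
    have h1 : ∏ i ∈ Finset.univ.erase (i₁ m), eval a ((X (some i) : Rp m) ^ 2 + X (some i)) = 0 := by
      refine Finset.prod_eq_zero (Finset.mem_erase.mpr ⟨i₀_ne_i₁ m, Finset.mem_univ _⟩) ?_
      simp [ha]
    rw [h1]
    have h2 : eval a ((X (some (i₁ m)) : Rp m) ^ 2 + X (some (i₁ m))) = 0 := by
      simp [ha]
    rw [h2]
    ring
  have := congrArg (eval a) hg
  rw [map_mul, hza, zero_mul] at this
  simp [ha, i₀_ne_i₁ m] at this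

/-- the coordinates product (all variables except `i₀, i₁`) in `T`. -/
def A2 : Tp m := ∏ i ∈ (Finset.univ.erase (i₁ m)).erase (i₀ m), ((X i : Tp m) ^ 2 + X i)

def numT : Tp m := X (i₀ m) ^ 3 * X (i₁ m) - A2 m

def denT : Tp m := A2 m - X (i₀ m) ^ 3 * X (i₁ m) ^ 2

lemma eval_A2 (u : Fin (m + 2) → ℂ) :
    eval u (A2 m) = ∏ i ∈ (Finset.univ.erase (i₁ m)).erase (i₀ m), (u i ^ 2 + u i) := by
  simp [A2]

lemma eval_A2_ones (u : Fin (m + 2) → ℂ) (hu : ∀ i, i ≠ i₀ m → i ≠ i₁ m → u i = 1) :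
    eval u (A2 m) ≠ 0 := by
  rw [eval_A2]
  refine Finset.prod_ne_zero_iff.mpr fun i hi => ?_
  rw [hu i (Finset.ne_of_mem_erase hi) (Finset.ne_of_mem_erase (Finset.mem_of_mem_erase hi))]
  norm_num

lemma numT_ne_zero : numT m ≠ 0 := by
  intro h
  set u : Fin (m + 2) → ℂ := fun i => if i = i₁ m then 0 else 1 with hu
  have := congrArg (eval u) h
  rw [numT, map_sub, map_mul, map_pow, map_zero] at this
  rw [eval_X, eval_X, show u (i₁ m) = 0 from if_pos rfl, mul_zero, zero_sub, neg_eq_zero] at this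
  exact eval_A2_ones m u (fun i _ h1 => if_neg h1) this

lemma denT_ne_zero : denT m ≠ 0 := by
  intro h
  set u : Fin (m + 2) → ℂ := fun i => if i = i₁ m then 0 else 1 with hu
  have := congrArg (eval u) h
  rw [denT, map_sub, map_mul, map_pow, map_pow, map_zero] at this
  rw [eval_X, eval_X, show u (i₁ m) = 0 from if_pos rfl] at this
  norm_num at this
  exact eval_A2_ones m u (fun i _ h1 => if_neg h1) this

lemma i₀_mem_erase : i₀ m ∈ Finset.univ.erase (i₁ m) :=
  Finset.mem_erase.mpr ⟨i₀_ne_i₁ m, Finset.mem_univ _⟩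

/-- the product in `R` over all variables except `i₀, i₁`. -/
def AR : Rp m := ∏ i ∈ (Finset.univ.erase (i₁ m)).erase (i₀ m),
  ((X (some i) : Rp m) ^ 2 + X (some i))

lemma fpoly_split :
    fpoly m = ((X (some (i₀ m)) : Rp m) ^ 2 + X (some (i₀ m))) * AR m -
      X none ^ 3 * (X (some (i₁ m)) ^ 2 + X (some (i₁ m))) := by
  rw [fpoly, ← Finset.mul_prod_erase _ _ (i₀_mem_erase m), AR]

def ab : FQ m := Φ m (AR m)

/-- the coordinate assignment for `ρ`. -/
def vco : Fin (m + 2) → FQ m := fun i =>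
  if i = i₀ m then zb m else if i = i₁ m then wb m / yb m else Φ m (X (some i))

/-- the parametrization map `T → FQ`. -/
def ρ : Tp m →ₐ[ℂ] FQ m := aeval (vco m)

lemma ρ_X_i₀ : ρ m (X (i₀ m)) = zb m := by
  rw [ρ, aeval_X, vco, if_pos rfl]

lemma ρ_X_i₁ : ρ m (X (i₁ m)) = wb m / yb m := by
  rw [ρ, aeval_X, vco, if_neg (Ne.symm (i₀_ne_i₁ m)), if_pos rfl]

lemma ρ_X_other (i : Fin (m + 2)) (h0 : i ≠ i₀ m) (h1 : i ≠ i₁ m) :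
    ρ m (X i) = Φ m (X (some i)) := by
  rw [ρ, aeval_X, vco, if_neg h0, if_neg h1]

lemma ρ_A2 : ρ m (A2 m) = ab m := by
  rw [ρ, A2, map_prod, ab, AR, map_prod]
  refine Finset.prod_congr rfl fun i hi => ?_
  have h0 : i ≠ i₀ m := Finset.ne_of_mem_erase hi
  have h1 : i ≠ i₁ m := Finset.ne_of_mem_erase (Finset.mem_of_mem_erase hi)
  rw [map_add, map_pow, aeval_X, vco, if_neg h0, if_neg h1, map_add, map_pow]

/-- the basic relation in `FQ`. -/
lemma rel0 : ab m * (yb m ^ 2 + yb m) - zb m ^ 3 * (wb m ^ 2 + wb m) = 0 := by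
  have h : Φ m (((X (some (i₀ m)) : Rp m) ^ 2 + X (some (i₀ m))) * AR m -
      X none ^ 3 * (X (some (i₁ m)) ^ 2 + X (some (i₁ m)))) = 0 := by
    rw [← fpoly_split]; exact Φ_fpoly m
  simp only [map_sub, map_mul, map_add, map_pow] at h
  unfold yb wb zb ab
  linear_combination h

lemma wb_eq : wb m = (wb m / yb m) * yb m := (div_mul_cancel₀ _ (yb_ne_zero m)).symm

/-- the key linear relation: `yb * ρ(denT) = ρ(numT)`. -/
lemma hrel : yb m * ρ m (denT m) = ρ m (numT m) := by
  rw [denT, numT]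
  simp only [map_sub, map_mul, map_pow, ρ_X_i₀, ρ_X_i₁, ρ_A2]
  have h0 := rel0 m
  have hy := yb_ne_zero m
  field_simp
  linear_combination h0
lemma exists_eval_ne_zero {p : Tp m} (hp : p ≠ 0) : ∃ τ : Fin (m + 2) → ℂ, eval τ p ≠ 0 := by
  by_contra h
  push_neg at h
  exact hp (MvPolynomial.funext fun τ => by simpa using h τ)

lemma rho_inj : Function.Injective (ρ m) := by
  rw [injective_iff_map_eq_zero]
  intro P hP
  by_contra hP0
  classical
  set x : Rp m := X (some (i₀ m)) with hx
  set L := Localization.Away x with hL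
  set j : Rp m →+* L := algebraMap (Rp m) L with hj
  have hyunit : IsUnit (Φ m x) := isUnit_iff_ne_zero.mpr (yb_ne_zero m)
  set κ : L →+* FQ m := IsLocalization.Away.lift x hyunit with hκ
  have hκj : ∀ r : Rp m, κ (j r) = Φ m r := fun r => IsLocalization.Away.lift_eq x hyunit r
  set u : Fin (m + 2) → L := fun i =>
    if i = i₀ m then j (X none)
    else if i = i₁ m then j (X (some (i₁ m))) * IsLocalization.Away.invSelf x
    else j (X (some i)) with hu
  set lam : Tp m →+* L := eval₂Hom (j.comp (MvPolynomial.C : ℂ →+* Rp m)) u with hlam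
  have hmulinv : j x * IsLocalization.Away.invSelf x = (1 : L) :=
    IsLocalization.Away.mul_invSelf x
  have hκinv : κ (IsLocalization.Away.invSelf x) = (Φ m x)⁻¹ := by
    refine (inv_eq_of_mul_eq_one_right ?_).symm
    rw [← hκj x, ← map_mul, hmulinv, map_one]
  have hκlam : ∀ p : Tp m, κ (lam p) = ρ m p := by
    have hcomp : κ.comp lam = (ρ m).toRingHom := by
      apply MvPolynomial.ringHom_ext
      · intro c
        simp only [RingHom.comp_apply, hlam, eval₂Hom_C, RingHom.comp_apply]
        rw [hκj, Φ_C]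
        simp [ρ]
      · intro i
        rw [RingHom.comp_apply, hlam, eval₂Hom_X']
        rw [show ((ρ m).toRingHom (X i) : FQ m) = ρ m (X i) from rfl]
        simp only [hu]
        rcases eq_or_ne i (i₀ m) with h0 | h0
        · subst h0
          rw [if_pos rfl, hκj, ρ_X_i₀, zb]
        · rcases eq_or_ne i (i₁ m) with h1 | h1
          · subst h1
            rw [if_neg h0, if_pos rfl, map_mul, hκj, hκinv, ρ_X_i₁, div_eq_mul_inv, wb, yb]
          · rw [if_neg h0, if_neg h1, hκj, ρ_X_other m i h0 h1]
    intro p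
    exact DFunLike.congr_fun hcomp p
  obtain ⟨⟨N, s⟩, hNs⟩ := IsLocalization.surj (Submonoid.powers x) (lam P)
  obtain ⟨d, hd⟩ := s.2
  have hN0 : Φ m N = 0 := by
    have h := congrArg κ hNs
    rw [map_mul, hκlam, hP, zero_mul, hκj] at h
    exact h.symm
  have hfdvd : fpoly m ∣ N := (Φ_eq_zero_iff m N).mp hN0
  -- choose an evaluation point
  have hprod : P * numT m * denT m ≠ 0 :=
    mul_ne_zero (mul_ne_zero hP0 (numT_ne_zero m)) (denT_ne_zero m)
  obtain ⟨τ, hτ⟩ := exists_eval_ne_zero m hprod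
  rw [map_mul, map_mul] at hτ
  have hτP : eval τ P ≠ 0 := fun h => hτ (by rw [h]; ring)
  have hτnum : eval τ (numT m) ≠ 0 := fun h => hτ (by rw [h]; ring)
  have hτden : eval τ (denT m) ≠ 0 := fun h => hτ (by rw [h]; ring)
  set Aτ : ℂ := eval τ (A2 m) with hAτ
  set ζ : ℂ := τ (i₀ m) with hζ
  set α : ℂ := τ (i₁ m) with hα
  have hnum_eval : eval τ (numT m) = ζ ^ 3 * α - Aτ := by
    rw [numT, map_sub, map_mul, map_pow, eval_X, eval_X]
  have hden_eval : eval τ (denT m) = Aτ - ζ ^ 3 * α ^ 2 := by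
    rw [denT, map_sub, map_mul, map_pow, map_pow, eval_X, eval_X]
  rw [hnum_eval] at hτnum
  rw [hden_eval] at hτden
  set υ : ℂ := (ζ ^ 3 * α - Aτ) / (Aτ - ζ ^ 3 * α ^ 2) with hυdef
  have hυ : υ ≠ 0 := div_ne_zero hτnum hτden
  have hclear : (Aτ - ζ ^ 3 * α ^ 2) * υ = ζ ^ 3 * α - Aτ := by
    rw [hυdef, mul_div_cancel₀ _ hτden]
  set a : Option (Fin (m + 2)) → ℂ := fun o =>
    o.elim ζ (fun i => if i = i₀ m then υ else if i = i₁ m then α * υ else τ i) with ha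
  have ha_y : eval a x = υ := by simp [ha, hx]
  have haAR : eval a (AR m) = Aτ := by
    rw [AR, map_prod, hAτ, eval_A2]
    refine Finset.prod_congr rfl fun i hi => ?_
    have h0 : i ≠ i₀ m := Finset.ne_of_mem_erase hi
    have h1 : i ≠ i₁ m := Finset.ne_of_mem_erase (Finset.mem_of_mem_erase hi)
    simp [ha, h0, h1]
  have ha_f : eval a (fpoly m) = 0 := by
    rw [fpoly_split, map_sub, map_mul, map_mul, map_pow, map_add, map_pow, map_add, map_pow,
      haAR, eval_X, eval_X, eval_X]
    have h0 : a (some (i₀ m)) = υ := by simp [ha]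
    have h1 : a (some (i₁ m)) = α * υ := by simp [ha, Ne.symm (i₀_ne_i₁ m), i₀_ne_i₁ m]
    have hnone : a none = ζ := rfl
    rw [h0, h1, hnone]
    linear_combination υ * hclear
  have haunit : IsUnit (eval a x) := by rw [ha_y]; exact isUnit_iff_ne_zero.mpr hυ
  set ev : L →+* ℂ := IsLocalization.Away.lift x haunit with hev
  have hevj : ∀ r : Rp m, ev (j r) = eval a r := fun r =>
    IsLocalization.Away.lift_eq x haunit r
  have hevinv : ev (IsLocalization.Away.invSelf x) = υ⁻¹ := by
    have h1 : ev (j x) * ev (IsLocalization.Away.invSelf x) = 1 := by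
      rw [← map_mul, hmulinv, map_one]
    rw [hevj, ha_y] at h1
    exact (inv_eq_of_mul_eq_one_right h1).symm
  have hevlam : ev (lam P) = eval τ P := by
    have hcomp : ev.comp lam = (eval τ : Tp m →+* ℂ) := by
      apply MvPolynomial.ringHom_ext
      · intro c
        simp only [RingHom.comp_apply, hlam, eval₂Hom_C, RingHom.comp_apply]
        rw [hevj]
        simp
      · intro i
        rw [RingHom.comp_apply, hlam, eval₂Hom_X']
        rw [show ((eval τ : Tp m →+* ℂ) (X i) : ℂ) = τ i from eval_X i]
        simp only [hu]
        rcases eq_or_ne i (i₀ m) with h0 | h0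
        · subst h0
          rw [if_pos rfl, hevj]
          simp [ha]
          exact hζ
        · rcases eq_or_ne i (i₁ m) with h1 | h1
          · subst h1
            rw [if_neg h0, if_pos rfl, map_mul, hevj, hevinv]
            have : eval a (X (some (i₁ m)) : Rp m) = α * υ := by
              simp [ha, Ne.symm (i₀_ne_i₁ m), i₀_ne_i₁ m]
            rw [this]
            field_simp
            exact hα
          · rw [if_neg h0, if_neg h1, hevj]
            simp [ha, h0, h1]
    exact DFunLike.congr_fun hcomp P
  -- final contradiction
  have hfin := congrArg ev hNs
  rw [map_mul, hevlam, hevj, hevj] at hfin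
  obtain ⟨g, hg⟩ := hfdvd
  rw [hg, map_mul, ha_f, zero_mul] at hfin
  rw [← hd] at hfin
  rw [map_pow, ha_y] at hfin
  exact hτP (by
    have := mul_eq_zero.mp hfin
    rcases this with h | h
    · exact h
    · exact absurd h (pow_ne_zero d hυ))

lemma ρ_ne_zero {p : Tp m} (hp : p ≠ 0) : ρ m p ≠ 0 := fun h =>
  hp (rho_inj m (h.trans (map_zero (ρ m)).symm))

/-- every element of the image of `R` in `FQ` is a ratio of elements of the image of `ρ`. -/
lemma Φ_good (r : Rp m) : ∃ p q : Tp m, ρ m q ≠ 0 ∧ Φ m r * ρ m q = ρ m p := by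
  induction r using MvPolynomial.induction_on with
  | C c =>
    exact ⟨MvPolynomial.C c, 1, by simp, by rw [map_one, mul_one, Φ_C, ρ, aeval_C]⟩
  | add p q hp hq =>
    obtain ⟨p1, q1, hq1, h1⟩ := hp
    obtain ⟨p2, q2, hq2, h2⟩ := hq
    refine ⟨p1 * q2 + p2 * q1, q1 * q2, by rw [map_mul]; exact mul_ne_zero hq1 hq2, ?_⟩
    rw [map_add, map_add, map_mul, map_mul, map_mul]
    calc (Φ m p + Φ m q) * (ρ m q1 * ρ m q2)
        = (Φ m p * ρ m q1) * ρ m q2 + (Φ m q * ρ m q2) * ρ m q1 := by ring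
      _ = ρ m p1 * ρ m q2 + ρ m p2 * ρ m q1 := by rw [h1, h2]
  | mul_X p i hp =>
    obtain ⟨p1, q1, hq1, h1⟩ := hp
    have hXi : ∃ p2 q2 : Tp m, ρ m q2 ≠ 0 ∧ Φ m (X i) * ρ m q2 = ρ m p2 := by
      match i with
      | none =>
        exact ⟨X (i₀ m), 1, by simp, by rw [map_one, mul_one, ρ_X_i₀, zb]⟩
      | some i =>
        rcases eq_or_ne i (i₀ m) with h0 | h0
        · subst h0
          exact ⟨numT m, denT m, ρ_ne_zero m (denT_ne_zero m), hrel m⟩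
        · rcases eq_or_ne i (i₁ m) with h1' | h1'
          · subst h1'
            refine ⟨X (i₁ m) * numT m, denT m, ρ_ne_zero m (denT_ne_zero m), ?_⟩
            have : Φ m (X (some (i₁ m))) = wb m := rfl
            rw [this, wb_eq m, map_mul, ρ_X_i₁, mul_assoc, hrel m]
          · exact ⟨X i, 1, by simp, by rw [map_one, mul_one, ρ_X_other m i h0 h1']⟩
    obtain ⟨p2, q2, hq2, h2⟩ := hXi
    refine ⟨p1 * p2, q1 * q2, by rw [map_mul]; exact mul_ne_zero hq1 hq2, ?_⟩
    rw [map_mul, map_mul, map_mul]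
    calc Φ m p * Φ m (X i) * (ρ m q1 * ρ m q2)
        = (Φ m p * ρ m q1) * (Φ m (X i) * ρ m q2) := by ring
      _ = ρ m p1 * ρ m p2 := by rw [h1, h2]

lemma final_iso : Nonempty (FQ m ≃ₐ[ℂ] FractionRing (Tp m)) := by
  letI : Algebra (Tp m) (FQ m) := (ρ m).toRingHom.toAlgebra
  have halg : ∀ p : Tp m, algebraMap (Tp m) (FQ m) p = ρ m p := fun _ => rfl
  haveI : IsFractionRing (Tp m) (FQ m) := by
    refine ⟨fun y => ?_, fun z => ?_, fun {p q} h => ?_⟩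
    · rw [halg]
      exact isUnit_iff_ne_zero.mpr (ρ_ne_zero m (nonZeroDivisors.coe_ne_zero y))
    · -- surjectivity
      obtain ⟨q1, q2, hq2, hz⟩ := IsFractionRing.div_surjective (A := Qp m) z
      obtain ⟨P1, rfl⟩ := Ideal.Quotient.mk_surjective q1
      obtain ⟨P2, rfl⟩ := Ideal.Quotient.mk_surjective q2
      obtain ⟨a1, b1, hb1, h1⟩ := Φ_good m P1
      obtain ⟨a2, b2, hb2, h2⟩ := Φ_good m P2
      have hP2 : Φ m P2 ≠ 0 := by
        rw [Φ, RingHom.comp_apply]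
        intro hcon
        have := (IsFractionRing.injective (Qp m) (FQ m)) (hcon.trans (map_zero _).symm)
        exact nonZeroDivisors.coe_ne_zero ⟨_, hq2⟩ this
      have ha2 : ρ m a2 ≠ 0 := by
        rw [← h2]
        exact mul_ne_zero hP2 hb2
      refine ⟨⟨a1 * b2, ⟨b1 * a2, mem_nonZeroDivisors_of_ne_zero ?_⟩⟩, ?_⟩
      · intro hcon
        apply mul_ne_zero hb1 ha2
        rw [← map_mul, hcon, map_zero]
      · show z * algebraMap (Tp m) (FQ m) (b1 * a2) = algebraMap (Tp m) (FQ m) (a1 * b2)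
        rw [halg, halg, map_mul, map_mul]
        have hz' : z = Φ m P1 / Φ m P2 := by
          rw [← hz]; rfl
        rw [hz', ← h1, ← h2]
        field_simp
    · -- exists_of_eq
      rw [halg, halg] at h
      exact ⟨1, by rw [rho_inj m h]⟩
  let e := IsLocalization.algEquiv (nonZeroDivisors (Tp m)) (FQ m) (FractionRing (Tp m))
  refine ⟨AlgEquiv.ofRingEquiv (f := e.toRingEquiv) fun c => ?_⟩
  show e (algebraMap ℂ (FQ m) c) = algebraMap ℂ (FractionRing (Tp m)) c
  have h1 : algebraMap ℂ (FQ m) c = algebraMap (Tp m) (FQ m) (MvPolynomial.C c) := by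
    rw [halg]
    exact (aeval_C _ c).symm
  rw [h1, e.commutes, ← MvPolynomial.algebraMap_eq, ← IsScalarTower.algebraMap_apply]

end
end Stmt9


/-- for `n ≥ 2` and
`f = (y₁² + y₁)⋯(y_{n-1}² + y_{n-1}) - z³(yₙ² + yₙ) ∈ ℂ[y₁,…,yₙ,z]`
(the variable `some i` is `yᵢ` and `none` is `z`), the quotient ring
`ℂ[y₁,…,yₙ,z]/(f)` is an integral domain whose field of fractions is isomorphic as a
`ℂ`-algebra to the rational function field `ℂ(t₁,…,tₙ)`. -/
theorem stmt_9 (n : ℕ) (hn : 2 ≤ n)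
    (f : MvPolynomial (Option (Fin n)) ℂ)
    (hf : f = (∏ i ∈ Finset.univ.erase (⟨n - 1, by omega⟩ : Fin n),
          ((X (some i) : MvPolynomial (Option (Fin n)) ℂ) ^ 2 + X (some i))) -
        X none ^ 3 *
          ((X (some ⟨n - 1, by omega⟩) : MvPolynomial (Option (Fin n)) ℂ) ^ 2 +
            X (some ⟨n - 1, by omega⟩))) :
    IsDomain (MvPolynomial (Option (Fin n)) ℂ ⧸ Ideal.span {f}) ∧
      Nonempty ((FractionRing (MvPolynomial (Option (Fin n)) ℂ ⧸ Ideal.span {f})) ≃ₐ[ℂ]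
        FractionRing (MvPolynomial (Fin n) ℂ)) := by
  obtain ⟨m, rfl⟩ : ∃ m, n = m + 2 := ⟨n - 2, by omega⟩
  have hf' : f = Stmt9.fpoly m := hf
  subst hf'
  exact ⟨Stmt9.Qp_isDomain m, Stmt9.final_iso m⟩
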